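/- Let k be a field of characteristic ≠ 2 such that the quotient group k*/(k*)² has order 2 (k has a unique quadratic extension class). Then there exists no Galois field extension K/k of degree 4 whose Galois group is isomorphic to Klein's four-group; consequently, no A ∈ 𝒞(k) is commutative. -/

import Mathlib

open Module Function

variable {k : Type} [Field k]

theorem klein_core {A : Type} [AddCommGroup A] [Module k A]
    (hchar : (2 : k) ≠ 0)
    (hidx : ((powMonoidHom 2 : kˣ →* kˣ).range).index = 2)
    (mul : A →ₗ[k] A →ₗ[k] A) (one : A)
    (h4 : finrank k A = 4)
    (hone : ∀ x : A, mul one x = x ∧ mul x one = x)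
    (hdiv : ∀ a : A, a ≠ 0 →
        Function.Bijective (fun x => mul a x) ∧ Function.Bijective (fun x => mul x a))
    (α β : A →ₗ[k] A)
    (hαm : ∀ x y, α (mul x y) = mul (α x) (α y))
    (hβm : ∀ x y, β (mul x y) = mul (β x) (β y))
    (hα2 : ∀ x, α (α x) = x) (hβ2 : ∀ x, β (β x) = x)
    (hcm : ∀ x, α (β x) = β (α x))
    (hαne : ∃ x, α x ≠ x) (hβne : ∃ x, β x ≠ x) (hαβ : ∃ x, α x ≠ β x)
    (hcomm : ∀ x y, mul x y = mul y x) : False := by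
  haveI : FiniteDimensional k A := FiniteDimensional.of_finrank_pos (by rw [h4]; norm_num)
  have h4k : (4 : k) ≠ 0 := by
    intro h
    apply hchar
    have h22 : (2 : k) * 2 = 4 := by norm_num
    rcases mul_eq_zero.mp (h ▸ h22) with h' | h' <;> exact h'
  have half : ∀ y : A, (2 : k) • y = 0 → y = 0 := by
    intro y h
    rcases smul_eq_zero.mp h with h | h
    · exact absurd h hchar
    · exact h
  have cancel : ∀ (c : k) (x : A), x ≠ 0 → c • x = 0 → c = 0 := by
    intro c x hx h
    rcases smul_eq_zero.mp h with h | h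
    · exact h
    · exact absurd h hx
  -- zero divisors
  have hz : ∀ x y : A, x ≠ 0 → mul x y = 0 → y = 0 := by
    intro x y hx h
    have := (hdiv x hx).1.injective (a₁ := y) (a₂ := 0)
    simp only [map_zero] at this
    exact this h
  have hnz : ∀ x y : A, x ≠ 0 → y ≠ 0 → mul x y ≠ 0 := by
    intro x y hx hy h
    exact hy (hz x y hx h)
  -- one ≠ 0
  have hone0 : one ≠ 0 := by
    intro h
    have hall : ∀ x : A, x = 0 := by
      intro x
      have := (hone x).1
      rw [h] at this
      simpa using this.symm
    haveI : Subsingleton A := ⟨fun a b => by rw [hall a, hall b]⟩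
    rw [finrank_zero_of_subsingleton] at h4
    exact absurd h4 (by norm_num)
  -- automorphisms fix one
  have hαone : α one = one := by
    have h := hαm one (α one)
    rw [(hone (α one)).1, hα2, (hone (α one)).2] at h
    exact h.symm
  have hβone : β one = one := by
    have h := hβm one (β one)
    rw [(hone (β one)).1, hβ2, (hone (β one)).2] at h
    exact h.symm
  -- eigenspace decomposition
  have decomp : ∀ x : A, ∃ x1 x2 x3 x4 : A,
      (α x1 = x1 ∧ β x1 = x1) ∧ (α x2 = x2 ∧ β x2 = -x2) ∧
      (α x3 = -x3 ∧ β x3 = x3) ∧ (α x4 = -x4 ∧ β x4 = -x4) ∧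
      x = x1 + x2 + x3 + x4 := by
    intro x
    refine ⟨(4:k)⁻¹ • (x + α x + β x + α (β x)), (4:k)⁻¹ • (x + α x - β x - α (β x)),
            (4:k)⁻¹ • (x - α x + β x - α (β x)), (4:k)⁻¹ • (x - α x - β x + α (β x)),
            ⟨?_, ?_⟩, ⟨?_, ?_⟩, ⟨?_, ?_⟩, ⟨?_, ?_⟩, ?_⟩ <;>
      (try simp only [map_smul, map_add, map_sub, hα2, hβ2, ← hcm]) <;>
      try module
    · match_scalars <;> field_simp <;> norm_num
  -- from α ≠ id : a nonzero vector with α x = -x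
  have exα : ∃ x : A, x ≠ 0 ∧ α x = -x ∧ (β x = x ∨ β x = -x) := by
    obtain ⟨x, hx⟩ := hαne
    obtain ⟨x1, x2, x3, x4, h1, h2, h3, h4', hsum⟩ := decomp x
    by_cases e3 : x3 = 0
    · by_cases e4 : x4 = 0
      · exfalso
        apply hx
        rw [hsum, e3, e4]
        simp [map_add, h1.1, h2.1]
      · exact ⟨x4, e4, h4'.1, Or.inr h4'.2⟩
    · exact ⟨x3, e3, h3.1, Or.inl h3.2⟩
  have exβ : ∃ x : A, x ≠ 0 ∧ β x = -x ∧ (α x = x ∨ α x = -x) := by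
    obtain ⟨x, hx⟩ := hβne
    obtain ⟨x1, x2, x3, x4, h1, h2, h3, h4', hsum⟩ := decomp x
    by_cases e2 : x2 = 0
    · by_cases e4 : x4 = 0
      · exfalso
        apply hx
        rw [hsum, e2, e4]
        simp [map_add, h1.2, h3.2]
      · exact ⟨x4, e4, h4'.2, Or.inr h4'.1⟩
    · exact ⟨x2, e2, h2.2, Or.inl h2.1⟩
  have exαβ : ∃ x : A, x ≠ 0 ∧ ((α x = x ∧ β x = -x) ∨ (α x = -x ∧ β x = x)) := by
    obtain ⟨x, hx⟩ := hαβ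
    obtain ⟨x1, x2, x3, x4, h1, h2, h3, h4', hsum⟩ := decomp x
    by_cases e2 : x2 = 0
    · by_cases e3 : x3 = 0
      · exfalso
        apply hx
        rw [hsum, e2, e3]
        simp [map_add, h1.1, h1.2, h4'.1, h4'.2]
      · exact ⟨x3, e3, Or.inr ⟨h3.1, h3.2⟩⟩
    · exact ⟨x2, e2, Or.inl ⟨h2.1, h2.2⟩⟩
  -- get u in the (+,-) eigenspace and v in the (-,+) eigenspace, both nonzero
  have exuv : ∃ u v : A, u ≠ 0 ∧ v ≠ 0 ∧ α u = u ∧ β u = -u ∧ α v = -v ∧ β v = v := by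
    obtain ⟨x, hx0, hx⟩ := exαβ
    rcases hx with ⟨hxa, hxb⟩ | ⟨hxa, hxb⟩
    · -- x is u; need v
      obtain ⟨y, hy0, hya, hyb⟩ := exα
      rcases hyb with hyb | hyb
      · exact ⟨x, y, hx0, hy0, hxa, hxb, hya, hyb⟩
      · -- y in (-,-) : v := mul x y
        refine ⟨x, mul x y, hx0, hnz x y hx0 hy0, hxa, hxb, ?_, ?_⟩
        · rw [hαm, hxa, hya]; simp
        · rw [hβm, hxb, hyb]; simp
    · -- x is v; need u
      obtain ⟨y, hy0, hyb, hya⟩ := exβ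
      rcases hya with hya | hya
      · exact ⟨y, x, hy0, hx0, hya, hyb, hxa, hxb⟩
      · -- y in (-,-) : u := mul x y
        refine ⟨mul x y, x, hnz x y hx0 hy0, hx0, ?_, ?_, hxa, hxb⟩
        · rw [hαm, hxa, hya]; simp
        · rw [hβm, hxb, hyb]; simp
  obtain ⟨u, v, hu0, hv0, hαu, hβu, hαv, hβv⟩ := exuv
  set w : A := mul u v with hw
  have hw0 : w ≠ 0 := hnz u v hu0 hv0
  have hαw : α w = -w := by rw [hw, hαm, hαu, hαv]; simp
  have hβw : β w = -w := by rw [hw, hβm, hβu, hβv]; simp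
  -- linear independence of one, u, v, w
  have hind : LinearIndependent k ![one, u, v, w] := by
    rw [Fintype.linearIndependent_iff]
    intro c hc
    simp only [Fin.sum_univ_four, Matrix.cons_val_zero, Matrix.cons_val_one, Matrix.head_cons,
      Matrix.cons_val_two, Matrix.tail_cons, Matrix.cons_val_three] at hc
    have hcα : c 0 • one + c 1 • u - c 2 • v - c 3 • w = 0 := by
      have h := congrArg α hc
      simp only [map_add, map_smul, map_zero, hαone, hαu, hαv, hαw, smul_neg] at h
      linear_combination (norm := module) h
    have e12 : c 0 • one + c 1 • u = 0 := by
      apply half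
      linear_combination (norm := module) hc + hcα
    have e34 : c 2 • v + c 3 • w = 0 := by
      apply half
      linear_combination (norm := module) hc - hcα
    have e12β : c 0 • one - c 1 • u = 0 := by
      have h := congrArg β e12
      simp only [map_add, map_smul, map_zero, hβone, hβu, smul_neg] at h
      linear_combination (norm := module) h
    have e34β : c 2 • v - c 3 • w = 0 := by
      have h := congrArg β e34
      simp only [map_add, map_smul, map_zero, hβv, hβw, smul_neg] at h
      linear_combination (norm := module) h
    have hc0 : c 0 = 0 := by
      apply cancel _ one hone0
      apply half
      linear_combination (norm := module) e12 + e12β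
    have hc1 : c 1 = 0 := by
      apply cancel _ u hu0
      apply half
      linear_combination (norm := module) e12 - e12β
    have hc2 : c 2 = 0 := by
      apply cancel _ v hv0
      apply half
      linear_combination (norm := module) e34 + e34β
    have hc3 : c 3 = 0 := by
      apply cancel _ w hw0
      apply half
      linear_combination (norm := module) e34 - e34β
    intro i
    fin_cases i <;> assumption
  -- every vector fixed by α and β is a scalar multiple of one
  have fix_mem : ∀ y : A, α y = y → β y = y → ∃ a : k, y = a • one := by
    intro y hy1 hy2
    have hspan : Submodule.span k (Set.range ![one, u, v, w]) = ⊤ :=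
      hind.span_eq_top_of_card_eq_finrank (by simp [h4])
    have hy : y ∈ Submodule.span k (Set.range ![one, u, v, w]) := by rw [hspan]; trivial
    rw [Submodule.mem_span_range_iff_exists_fun] at hy
    obtain ⟨c, hcy⟩ := hy
    simp only [Fin.sum_univ_four, Matrix.cons_val_zero, Matrix.cons_val_one, Matrix.head_cons,
      Matrix.cons_val_two, Matrix.tail_cons, Matrix.cons_val_three] at hcy
    have hcα : c 0 • one + c 1 • u - c 2 • v - c 3 • w = y := by
      have h := congrArg α hcy
      simp only [map_add, map_smul, hαone, hαu, hαv, hαw, smul_neg, hy1] at h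
      linear_combination (norm := module) h
    have hcβ : c 0 • one - c 1 • u + c 2 • v - c 3 • w = y := by
      have h := congrArg β hcy
      simp only [map_add, map_smul, hβone, hβu, hβv, hβw, smul_neg, hy2] at h
      linear_combination (norm := module) h
    have e34 : c 2 • v + c 3 • w = 0 := by
      apply half
      linear_combination (norm := module) hcy - hcα
    have e13 : c 1 • u + c 3 • w = 0 := by
      apply half
      linear_combination (norm := module) hcy - hcβ
    have e34β : c 2 • v - c 3 • w = 0 := by
      have h := congrArg β e34
      simp only [map_add, map_smul, map_zero, hβv, hβw, smul_neg] at h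
      linear_combination (norm := module) h
    have e13β : c 1 • u - c 3 • w = 0 := by
      have h := congrArg α e13
      simp only [map_add, map_smul, map_zero, hαu, hαw, smul_neg] at h
      linear_combination (norm := module) h
    have hc3 : c 3 = 0 := by
      apply cancel _ w hw0
      apply half
      linear_combination (norm := module) e13 - e13β
    have hc2 : c 2 = 0 := by
      apply cancel _ v hv0
      apply half
      linear_combination (norm := module) e34 + e34β
    have hc1 : c 1 = 0 := by
      apply cancel _ u hu0
      apply half
      linear_combination (norm := module) e13 + e13β
    refine ⟨c 0, ?_⟩
    rw [← hcy, hc1, hc2, hc3]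
    simp
  -- squares of u and v are scalar multiples of one
  obtain ⟨a, huu⟩ := fix_mem (mul u u) (by rw [hαm, hαu]) (by rw [hβm, hβu]; simp)
  obtain ⟨b, hvv⟩ := fix_mem (mul v v) (by rw [hαm, hαv]; simp) (by rw [hβm, hβv])
  have ha0 : a ≠ 0 := by
    intro h
    apply hnz u u hu0 hu0
    rw [huu, h, zero_smul]
  have hb0 : b ≠ 0 := by
    intro h
    apply hnz v v hv0 hv0
    rw [hvv, h, zero_smul]
  -- a and b are nonsquares
  have nonsq : ∀ (x : A) (a' : k) (σ : A →ₗ[k] A), x ≠ 0 → σ x = -x → σ one = one →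
      mul x x = a' • one → ∀ e : k, e * e ≠ a' := by
    intro x a' σ hx hσx hσ1 hxx e he
    have hfac : mul (x - e • one) (x + e • one) = 0 := by
      have hexp : mul (x - e • one) (x + e • one)
          = mul x x + e • mul x one - e • mul one x - (e * e) • mul one one := by
        simp only [map_add, map_sub, map_smul, LinearMap.sub_apply, LinearMap.smul_apply,
          smul_smul]
        module
      rw [hexp, (hone x).2, (hone x).1, (hone one).1, hxx, he]
      module
    have hfix : σ x = x := by
      by_cases h1 : x - e • one = 0
      · have hx' : x = e • one := by linear_combination (norm := module) h1
        rw [hx', map_smul, hσ1]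
      · have h2 := hz _ _ h1 hfac
        have hx' : x = -(e • one) := by linear_combination (norm := module) h2
        rw [hx', map_neg, map_smul, hσ1]
    rw [hσx] at hfix
    apply hx
    apply half
    linear_combination (norm := module) -hfix
  -- pass to the unit group
  have hmem : ∀ (a' : k) (h' : a' ≠ 0),
      Units.mk0 a' h' ∈ (powMonoidHom 2 : kˣ →* kˣ).range → ∃ e : k, e * e = a' := by
    rintro a' h' ⟨c, hc⟩
    refine ⟨(c : k), ?_⟩
    have h := congrArg Units.val hc
    simpa [powMonoidHom_apply, pow_two] using h
  have huns : Units.mk0 a ha0 ∉ (powMonoidHom 2 : kˣ →* kˣ).range := by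
    intro h
    obtain ⟨e, he⟩ := hmem a ha0 h
    exact nonsq u a β hu0 hβu hβone huu e he
  have hvns : Units.mk0 b hb0 ∉ (powMonoidHom 2 : kˣ →* kˣ).range := by
    intro h
    obtain ⟨e, he⟩ := hmem b hb0 h
    exact nonsq v b α hv0 hαv hαone hvv e he
  have hH : Units.mk0 a ha0 * (Units.mk0 b hb0)⁻¹ ∈ (powMonoidHom 2 : kˣ →* kˣ).range := by
    rw [Subgroup.mul_mem_iff_of_index_two hidx]
    rw [inv_mem_iff]
    exact iff_of_false huns hvns
  obtain ⟨c, hc⟩ := hH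
  have hc' : (c : k) * c * b = a := by
    have h := congrArg Units.val hc
    simp only [powMonoidHom_apply, Units.val_pow_eq_pow_val, Units.val_mul,
      Units.val_mk0, pow_two] at h
    rw [show ((Units.mk0 b hb0)⁻¹ : kˣ) = Units.mk0 b⁻¹ (inv_ne_zero hb0) by
      ext; simp] at h
    rw [Units.val_mk0] at h
    field_simp at h
    linear_combination h
  -- final contradiction
  have hfac : mul (u - (c : k) • v) (u + (c : k) • v) = 0 := by
    have hexp : mul (u - (c : k) • v) (u + (c : k) • v)
        = mul u u + (c : k) • mul u v - (c : k) • mul v u - ((c : k) * c) • mul v v := by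
      simp only [map_add, map_sub, map_smul, LinearMap.sub_apply, LinearMap.smul_apply,
        smul_smul]
      module
    rw [hexp, hcomm v u, huu, hvv, smul_smul, hc']
    module
  have hfix : α u = -u := by
    by_cases h1 : u - (c : k) • v = 0
    · have hu' : u = (c : k) • v := by linear_combination (norm := module) h1
      rw [hu', map_smul, hαv]
      module
    · have h2 := hz _ _ h1 hfac
      have hu' : u = -((c : k) • v) := by linear_combination (norm := module) h2
      rw [hu', map_neg, map_smul, hαv]
      module
  rw [hαu] at hfix
  apply hu0
  apply half
  linear_combination (norm := module) hfix

/-- A Kleinian pair for a nonassociative `k`-algebra `(A, mul)`: a pair of distinct commuting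
automorphisms, each of order 2. -/
def IsKleinPair {A : Type} [AddCommGroup A] [Module k A]
    (mul : A →ₗ[k] A →ₗ[k] A) (α β : A ≃ₗ[k] A) : Prop :=
  (∀ x y : A, α (mul x y) = mul (α x) (α y)) ∧
  (∀ x y : A, β (mul x y) = mul (β x) (β y)) ∧
  (∀ x : A, α (α x) = x) ∧ (∀ x : A, β (β x) = x) ∧
  (∀ x : A, α (β x) = β (α x)) ∧
  α ≠ LinearEquiv.refl k A ∧ β ≠ LinearEquiv.refl k A ∧ α ≠ β

/-- Let `k` be a field of characteristic ≠ 2 such that `k*/(k*)²` has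
order 2. Then there is no Galois field extension `K/k` of degree 4 whose Galois group is
Klein's four-group; consequently, no `A ∈ 𝒞(k)` is commutative. -/
theorem no_klein_galois_extension (hchar : (2 : k) ≠ 0)
    (hidx : ((powMonoidHom 2 : kˣ →* kˣ).range).index = 2) :
    (∀ (K : Type) [Field K] [Algebra k K] [FiniteDimensional k K],
      IsGalois k K → finrank k K = 4 →
      IsEmpty ((K ≃ₐ[k] K) ≃* Multiplicative (ZMod 2 × ZMod 2))) ∧
    (∀ (A : Type) [AddCommGroup A] [Module k A] [FiniteDimensional k A]
      (mul : A →ₗ[k] A →ₗ[k] A) (one : A),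
      finrank k A = 4 →
      (∀ x : A, mul one x = x ∧ mul x one = x) →
      (∀ a : A, a ≠ 0 →
        Function.Bijective (fun x => mul a x) ∧ Function.Bijective (fun x => mul x a)) →
      Set.range (fun s : k => s • one) ⊂
        {z : A | ∀ x y : A, mul (mul x y) z = mul x (mul y z)} →
      (∃ α β : A ≃ₗ[k] A, IsKleinPair mul α β) →
      ¬ ∀ x y : A, mul x y = mul y x) := by
  constructor
  · intro K _ _ _ _hGal hrk
    constructor
    intro e
    set g1 : Multiplicative (ZMod 2 × ZMod 2) := Multiplicative.ofAdd (1, 0) with hg1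
    set g2 : Multiplicative (ZMod 2 × ZMod 2) := Multiplicative.ofAdd (0, 1) with hg2
    set α : K ≃ₐ[k] K := e.symm g1 with hα
    set β : K ≃ₐ[k] K := e.symm g2 with hβ
    have hαα : α * α = 1 := by
      rw [hα, ← map_mul]
      rw [show g1 * g1 = 1 from by decide, map_one]
    have hββ : β * β = 1 := by
      rw [hβ, ← map_mul]
      rw [show g2 * g2 = 1 from by decide, map_one]
    have hcm : α * β = β * α := by
      simp only [hα, hβ, ← map_mul e.symm]
      rw [mul_comm]
    have hα1 : α ≠ 1 := by
      intro h
      have h' := congrArg e h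
      rw [hα, e.apply_symm_apply, map_one] at h'
      exact absurd h' (by decide)
    have hβ1 : β ≠ 1 := by
      intro h
      have h' := congrArg e h
      rw [hβ, e.apply_symm_apply, map_one] at h'
      exact absurd h' (by decide)
    have hαβ : α ≠ β := by
      intro h
      have h' := congrArg e h
      rw [hα, hβ, e.apply_symm_apply, e.apply_symm_apply] at h'
      exact absurd h' (by decide)
    refine klein_core hchar hidx (LinearMap.mul k K) 1 hrk ?_ ?_ α.toLinearMap β.toLinearMap
      ?_ ?_ ?_ ?_ ?_ ?_ ?_ ?_ ?_
    · intro x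
      constructor <;> simp [LinearMap.mul_apply']
    · intro a ha
      constructor
      · refine ⟨fun x y hxy => ?_, fun y => ⟨a⁻¹ * y, ?_⟩⟩
        · simp only [LinearMap.mul_apply'] at hxy
          exact mul_left_cancel₀ ha hxy
        · simp only [LinearMap.mul_apply']
          field_simp
      · refine ⟨fun x y hxy => ?_, fun y => ⟨y * a⁻¹, ?_⟩⟩
        · simp only [LinearMap.mul_apply'] at hxy
          exact mul_right_cancel₀ ha hxy
        · simp only [LinearMap.mul_apply']
          field_simp
    · intro x y
      simp [LinearMap.mul_apply', map_mul]
    · intro x y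
      simp [LinearMap.mul_apply', map_mul]
    · intro x
      have h := congrArg (fun (σ : K ≃ₐ[k] K) => σ x) hαα
      simpa [AlgEquiv.mul_apply] using h
    · intro x
      have h := congrArg (fun (σ : K ≃ₐ[k] K) => σ x) hββ
      simpa [AlgEquiv.mul_apply] using h
    · intro x
      have h := congrArg (fun (σ : K ≃ₐ[k] K) => σ x) hcm
      simpa [AlgEquiv.mul_apply] using h
    · by_contra h
      push_neg at h
      apply hα1
      ext x
      simpa using h x
    · by_contra h
      push_neg at h
      apply hβ1
      ext x
      simpa using h x
    · by_contra h
      push_neg at h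
      apply hαβ
      ext x
      simpa using h x
    · intro x y
      simp [LinearMap.mul_apply', mul_comm]
  · intro A _ _ _ mul one h4 hone hdiv _hnuc hpair hcomm
    obtain ⟨α, β, hαm, hβm, hα2, hβ2, hcmm, hα1, hβ1, hαβ⟩ := hpair
    refine klein_core hchar hidx mul one h4 hone hdiv α.toLinearMap β.toLinearMap
      ?_ ?_ ?_ ?_ ?_ ?_ ?_ ?_ hcomm
    · intro x y; simpa using hαm x y
    · intro x y; simpa using hβm x y
    · intro x; simpa using hα2 x
    · intro x; simpa using hβ2 x
    · intro x; simpa using hcmm x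
    · by_contra h
      push_neg at h
      apply hα1
      ext x
      simpa using h x
    · by_contra h
      push_neg at h
      apply hβ1
      ext x
      simpa using h x
    · by_contra h
      push_neg at h
      apply hαβ
      ext x
      simpa using h x
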